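/- Let n ≥ 2 and let C ⊆ ℝⁿ be a nonempty closed spindle convex set. (a) If C is contained in some closed ball of radius 1 but is not contained in any closed ball of radius r < 1, then C is itself a closed unit ball: C = {y : ‖y − q‖ ≤ 1} for some q ∈ ℝⁿ. (b) If C is not contained in any closed ball of radius 1, then C = ℝⁿ. -/

import Mathlib

noncomputable section

/-- `B[X]`: the intersection of all closed unit balls centered at points of `X`
(`Set.univ` when `X = ∅`). -/
def ballInter {n : ℕ} (X : Set (EuclideanSpace ℝ (Fin n))) :
    Set (EuclideanSpace ℝ (Fin n)) :=
  ⋂ x ∈ X, Metric.closedBall x 1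

/-- The closed spindle `[a,b]_s`: `B[B[{a,b}]]` if `dist a b ≤ 2`, all of the space
otherwise. -/
def spindle {n : ℕ} (a b : EuclideanSpace ℝ (Fin n)) :
    Set (EuclideanSpace ℝ (Fin n)) :=
  if dist a b ≤ 2 then ballInter (ballInter {a, b}) else Set.univ

/-- A set is spindle convex if it contains the closed spindle of any two of its points. -/
def SpindleConvex {n : ℕ} (C : Set (EuclideanSpace ℝ (Fin n))) : Prop :=
  ∀ a ∈ C, ∀ b ∈ C, spindle a b ⊆ C

/-- The spindle convex hull: the intersection of all spindle convex sets containing `X`. -/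
def spindleHull {n : ℕ} (X : Set (EuclideanSpace ℝ (Fin n))) :
    Set (EuclideanSpace ℝ (Fin n)) :=
  ⋂₀ {C : Set (EuclideanSpace ℝ (Fin n)) | X ⊆ C ∧ SpindleConvex C}

/-- Arc-distance `ρ(a,b) = 2 · arcsin(‖a - b‖ / 2)`. -/
def arcDist {n : ℕ} (a b : EuclideanSpace ℝ (Fin n)) : ℝ :=
  2 * Real.arcsin (dist a b / 2)


section AuxLemmas
open Metric Set

variable {n : ℕ}

lemma mem_ballInter_pair {a b z : EuclideanSpace ℝ (Fin n)} :
    z ∈ ballInter {a, b} ↔ dist z a ≤ 1 ∧ dist z b ≤ 1 := by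
  simp [ballInter]

lemma spindle_eq_univ {a b : EuclideanSpace ℝ (Fin n)} (h : 2 < dist a b) :
    spindle a b = Set.univ := by
  simp [spindle, not_le.mpr h]

lemma mem_spindle_iff {a b x : EuclideanSpace ℝ (Fin n)} (h : dist a b ≤ 2) :
    x ∈ spindle a b ↔ ∀ z, dist z a ≤ 1 → dist z b ≤ 1 → dist x z ≤ 1 := by
  rw [spindle, if_pos h]
  constructor
  · intro H z h1 h2
    have hz : z ∈ ballInter {a, b} := mem_ballInter_pair.mpr ⟨h1, h2⟩
    have := Set.mem_iInter₂.mp H z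
    simpa [ballInter, dist_comm] using Set.mem_iInter₂.mp (show x ∈ ballInter (ballInter {a,b}) from H) z hz
  · intro H
    refine Set.mem_iInter₂.mpr fun z hz => ?_
    rcases mem_ballInter_pair.mp hz with ⟨h1, h2⟩
    simpa [Metric.mem_closedBall, dist_comm] using H z h1 h2

lemma spindle_antipodal {a b : EuclideanSpace ℝ (Fin n)} (h : dist a b = 2) :
    spindle a b = Metric.closedBall (midpoint ℝ a b) 1 := by
  have hm : ballInter {a, b} = {midpoint ℝ a b} := by
    apply Set.Subset.antisymm
    · intro z hz
      rcases mem_ballInter_pair.mp hz with ⟨h1, h2⟩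
      have e1 : ‖z - a‖ ≤ 1 := by rwa [← dist_eq_norm]
      have e2 : ‖z - b‖ ≤ 1 := by rwa [← dist_eq_norm]
      have key : ‖z - midpoint ℝ a b‖ = 0 := by
        have h4 := parallelogram_law_with_norm ℝ (z - a) (z - b)
        have h5 : (z - a) - (z - b) = b - a := by abel
        have h6 : ‖b - a‖ = 2 := by rw [norm_sub_rev, ← dist_eq_norm]; exact h
        rw [h5, h6] at h4
        have e1' : 0 ≤ ‖z - a‖ := norm_nonneg _
        have e2' : 0 ≤ ‖z - b‖ := norm_nonneg _
        have h7 : ‖(z - a) + (z - b)‖ * ‖(z - a) + (z - b)‖ ≤ 0 := by nlinarith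
        have h9 : ‖(z - a) + (z - b)‖ = 0 := by nlinarith [norm_nonneg ((z-a)+(z-b))]
        have h8 : z - midpoint ℝ a b = (2:ℝ)⁻¹ • ((z - a) + (z - b)) := by
          rw [midpoint_eq_smul_add, invOf_eq_inv]
          module
        rw [h8, norm_smul, h9]
        simp
      have hzm : z = midpoint ℝ a b := by
        have := norm_eq_zero.mp key
        have := sub_eq_zero.mp this
        simpa using this
      simp [hzm]
    · intro z hz
      simp only [Set.mem_singleton_iff] at hz
      subst hz
      refine mem_ballInter_pair.mpr ⟨?_, ?_⟩
      · rw [dist_midpoint_left (𝕜 := ℝ), h]; norm_num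
      · rw [dist_midpoint_right (𝕜 := ℝ), h]; norm_num
  rw [spindle, if_pos h.le, hm]
  simp [ballInter]

set_option maxHeartbeats 1000000 in
lemma arc_mem_spindle {q a b x : EuclideanSpace ℝ (Fin n)} {R s t : ℝ}
    (hR : 1 ≤ R) (ha : ‖a - q‖ = R) (hb : ‖b - q‖ = R) (hx : ‖x - q‖ = R)
    (hd : dist a b ≤ 2) (hs : 0 ≤ s) (ht : 0 ≤ t)
    (hxc : x - q = s • (a - q) + t • (b - q)) :
    x ∈ spindle a b := by
  rw [mem_spindle_iff hd]
  intro z h1 h2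
  have hst : 1 ≤ s + t := by
    have htr : ‖x - q‖ ≤ s * ‖a - q‖ + t * ‖b - q‖ := by
      rw [hxc]
      calc ‖s • (a - q) + t • (b - q)‖ ≤ ‖s • (a - q)‖ + ‖t • (b - q)‖ := norm_add_le _ _
        _ = s * ‖a - q‖ + t * ‖b - q‖ := by
            rw [norm_smul, norm_smul, Real.norm_of_nonneg hs, Real.norm_of_nonneg ht]
    rw [hx, ha, hb] at htr
    nlinarith
  have hza : ‖(a - q) + (q - z)‖ ≤ 1 := by
    rw [show (a - q) + (q - z) = a - z by abel, ← dist_eq_norm, dist_comm]; exact h1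
  have hzb : ‖(b - q) + (q - z)‖ ≤ 1 := by
    rw [show (b - q) + (q - z) = b - z by abel, ← dist_eq_norm, dist_comm]; exact h2
  have expA : ‖(a - q) + (q - z)‖ ^ 2 = R ^ 2 + 2 * inner ℝ (a - q) (q - z) + ‖q - z‖ ^ 2 := by
    rw [norm_add_sq_real, ha]
  have expB : ‖(b - q) + (q - z)‖ ^ 2 = R ^ 2 + 2 * inner ℝ (b - q) (q - z) + ‖q - z‖ ^ 2 := by
    rw [norm_add_sq_real, hb]
  have hiA : (2:ℝ) * inner ℝ (a - q) (q - z) ≤ 1 - R ^ 2 - ‖q - z‖ ^ 2 := by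
    nlinarith [norm_nonneg ((a - q) + (q - z))]
  have hiB : (2:ℝ) * inner ℝ (b - q) (q - z) ≤ 1 - R ^ 2 - ‖q - z‖ ^ 2 := by
    nlinarith [norm_nonneg ((b - q) + (q - z))]
  have hxz : x - z = (s • (a - q) + t • (b - q)) + (q - z) := by
    rw [← hxc]; abel
  have hn : ‖s • (a - q) + t • (b - q)‖ = R := by rw [← hxc, hx]
  have expX : ‖x - z‖ ^ 2
      = R ^ 2 + 2 * (s * inner ℝ (a - q) (q - z) + t * inner ℝ (b - q) (q - z)) + ‖q - z‖ ^ 2 := by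
    rw [hxz, norm_add_sq_real, hn, inner_add_left, real_inner_smul_left, real_inner_smul_left]
  have hc : 1 - R ^ 2 - ‖q - z‖ ^ 2 ≤ 0 := by nlinarith [sq_nonneg ‖q - z‖]
  have t1 : s * (2 * inner ℝ (a - q) (q - z)) ≤ s * (1 - R ^ 2 - ‖q - z‖ ^ 2) :=
    mul_le_mul_of_nonneg_left hiA hs
  have t2 : t * (2 * inner ℝ (b - q) (q - z)) ≤ t * (1 - R ^ 2 - ‖q - z‖ ^ 2) :=
    mul_le_mul_of_nonneg_left hiB ht
  have t3 : (s + t) * (1 - R ^ 2 - ‖q - z‖ ^ 2) ≤ 1 * (1 - R ^ 2 - ‖q - z‖ ^ 2) :=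
    mul_le_mul_of_nonpos_right hst hc
  have hb2 : ‖x - z‖ ^ 2 ≤ 1 := by nlinarith [t1, t2, t3, expX]
  rw [dist_eq_norm]
  nlinarith [norm_nonneg (x - z)]

lemma antipodal_of_combination {C : Set (EuclideanSpace ℝ (Fin n))} (hC : SpindleConvex C)
    {q : EuclideanSpace ℝ (Fin n)} {R : ℝ} (hR : 1 ≤ R) :
    ∀ k (L : List (ℝ × EuclideanSpace ℝ (Fin n))), L.length ≤ k → L ≠ [] →
    (∀ p ∈ L, 0 < p.1 ∧ p.2 ∈ C ∧ ‖p.2 - q‖ = R) →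
    (L.map (fun p => p.1 • (p.2 - q))).sum = 0 →
    (∃ a ∈ C, ∃ b ∈ C, dist a b = 2 * R) ∨ C = Set.univ := by
  intro k
  induction k with
  | zero =>
    intro L hl hne _ _
    exact absurd (List.eq_nil_of_length_eq_zero (Nat.le_zero.mp hl)) hne
  | succ k ih =>
    intro L hl hne hmem hsum
    match L with
    | [] => exact absurd rfl hne
    | [(w, p)] =>
      simp only [List.map_cons, List.map_nil, List.sum_cons, List.sum_nil, add_zero] at hsum
      obtain ⟨hw, hpC, hpR⟩ := hmem (w, p) (by simp)
      have hp0 : p - q = 0 := by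
        rcases smul_eq_zero.mp hsum with h | h
        · exact absurd h (ne_of_gt hw)
        · exact h
      rw [hp0, norm_zero] at hpR
      exfalso
      linarith
    | (w₀, p₀) :: (w₁, p₁) :: rest =>
      obtain ⟨hw₀, hp₀C, hp₀R⟩ := hmem (w₀, p₀) (by simp)
      obtain ⟨hw₁, hp₁C, hp₁R⟩ := hmem (w₁, p₁) (by simp)
      have hw₀' : (0:ℝ) < w₀ := hw₀
      have hw₁' : (0:ℝ) < w₁ := hw₁
      have hp₀R' : ‖p₀ - q‖ = R := hp₀R
      have hp₁R' : ‖p₁ - q‖ = R := hp₁R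
      have hp₀C' : p₀ ∈ C := hp₀C
      have hp₁C' : p₁ ∈ C := hp₁C
      have hRpos : (0:ℝ) < R := lt_of_lt_of_le one_pos hR
      by_cases hdist : dist p₀ p₁ ≤ 2
      · by_cases hv0 : w₀ • (p₀ - q) + w₁ • (p₁ - q) = 0
        · left
          have heq : w₀ • (p₀ - q) = -(w₁ • (p₁ - q)) := by
            rw [← add_eq_zero_iff_eq_neg]; exact hv0
          have hnorm : w₀ * R = w₁ * R := by
            have hcn := congrArg norm heq
            rwa [norm_smul, norm_neg, norm_smul, Real.norm_of_nonneg hw₀'.le,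
              Real.norm_of_nonneg hw₁'.le, hp₀R', hp₁R'] at hcn
          have hww : w₀ = w₁ := mul_right_cancel₀ (ne_of_gt hRpos) hnorm
          have hpp : p₀ - q = -(p₁ - q) := by
            have h2 : w₀ • (p₀ - q) = w₀ • (-(p₁ - q)) := by rw [heq, hww, smul_neg]
            exact smul_right_injective _ (ne_of_gt hw₀') h2
          refine ⟨p₀, hp₀C', p₁, hp₁C', ?_⟩
          rw [dist_eq_norm, show p₀ - p₁ = (p₀ - q) - (p₁ - q) by abel, hpp,
            show -(p₁ - q) - (p₁ - q) = -((2:ℝ) • (p₁ - q)) by module, norm_neg, norm_smul,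
            Real.norm_of_nonneg (by norm_num : (0:ℝ) ≤ 2), hp₁R']
        · have hvn : (0:ℝ) < ‖w₀ • (p₀ - q) + w₁ • (p₁ - q)‖ := norm_pos_iff.mpr hv0
          set v := w₀ • (p₀ - q) + w₁ • (p₁ - q) with hv
          set x := q + (R / ‖v‖) • v with hxdef
          have hxsub : x - q = (R / ‖v‖) • v := by rw [hxdef]; abel
          have hxq : ‖x - q‖ = R := by
            rw [hxsub, norm_smul, Real.norm_of_nonneg (by positivity : (0:ℝ) ≤ R / ‖v‖)]
            exact div_mul_cancel₀ R (ne_of_gt hvn)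
          have hxc : x - q = (R * w₀ / ‖v‖) • (p₀ - q) + (R * w₁ / ‖v‖) • (p₁ - q) := by
            rw [hxsub, hv, smul_add, smul_smul, smul_smul]
            ring_nf
          have hxC : x ∈ C := by
            refine hC p₀ hp₀C' p₁ hp₁C' ?_
            exact arc_mem_spindle hR hp₀R' hp₁R' hxq hdist (by positivity) (by positivity) hxc
          refine ih ((‖v‖ / R, x) :: rest) ?_ (by simp) ?_ ?_
          · simpa using Nat.le_of_succ_le_succ hl
          · intro p hp
            rcases List.mem_cons.mp hp with h | h
            · rw [h]; exact ⟨by positivity, hxC, hxq⟩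
            · exact hmem p (by simp [h])
          · simp only [List.map_cons, List.sum_cons] at hsum ⊢
            have hvv : (‖v‖ / R) • (x - q) = v := by
              rw [hxsub, smul_smul, div_mul_div_comm, mul_comm ‖v‖ R,
                div_self (by positivity : (R * ‖v‖ : ℝ) ≠ 0), one_smul]
            rw [hvv, hv, ← add_assoc] at *
            exact hsum
      · right
        have hu := spindle_eq_univ (not_le.mp hdist)
        have hsub := hC p₀ hp₀C' p₁ hp₁C'
        rw [hu] at hsub
        exact Set.eq_univ_of_univ_subset hsub

namespace SpindleAux

variable {n : ℕ}

def joinIter (s : Set (EuclideanSpace ℝ (Fin n))) : ℕ → Set (EuclideanSpace ℝ (Fin n))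
  | 0 => s
  | (k+1) => (fun p : ℝ × EuclideanSpace ℝ (Fin n) × EuclideanSpace ℝ (Fin n) =>
      p.1 • p.2.1 + (1 - p.1) • p.2.2) '' ((Set.Icc (0:ℝ) 1) ×ˢ s ×ˢ joinIter s k)

lemma joinIter_isCompact {s : Set (EuclideanSpace ℝ (Fin n))} (hs : IsCompact s) (k : ℕ) :
    IsCompact (joinIter s k) := by
  induction k with
  | zero => exact hs
  | succ k ih => exact ((isCompact_Icc.prod (hs.prod ih)).image (by fun_prop))

lemma joinIter_subset_convexHull {s : Set (EuclideanSpace ℝ (Fin n))} (k : ℕ) :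
    joinIter s k ⊆ convexHull ℝ s := by
  induction k with
  | zero => exact subset_convexHull ℝ s
  | succ k ih =>
    rintro u ⟨⟨θ, x, y⟩, ⟨hθ, hx, hy⟩, rfl⟩
    exact (convex_convexHull ℝ s) (subset_convexHull ℝ s hx) (ih hy) hθ.1
      (by linarith [hθ.2]) (by ring)

lemma joinIter_mono {s : Set (EuclideanSpace ℝ (Fin n))} (hne : s.Nonempty) {k m : ℕ}
    (h : k ≤ m) : joinIter s k ⊆ joinIter s m := by
  induction m with
  | zero => rw [Nat.le_zero.mp h]
  | succ m ih =>
    rcases Nat.lt_or_ge k (m+1) with h' | h'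
    · intro y hy
      obtain ⟨x₀, hx₀⟩ := hne
      exact ⟨(0, x₀, y), ⟨by norm_num, hx₀, ih (Nat.lt_succ_iff.mp h') hy⟩, by simp⟩
    · rw [le_antisymm h h']

lemma convexHull_finset_subset_joinIter {s : Set (EuclideanSpace ℝ (Fin n))} :
    ∀ t : Finset (EuclideanSpace ℝ (Fin n)), ↑t ⊆ s → t.Nonempty →
    convexHull ℝ (↑t : Set (EuclideanSpace ℝ (Fin n))) ⊆ joinIter s (t.card - 1) := by
  classical
  intro t
  induction t using Finset.induction_on with
  | empty => intro _ h; exact absurd h (by simp)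
  | @insert a t' ha ih =>
    intro hts hne
    rcases t'.eq_empty_or_nonempty with h' | h'
    · subst h'
      intro u hu
      have hu' : u = a := by
        have : (↑(insert a (∅ : Finset (EuclideanSpace ℝ (Fin n)))) :
            Set (EuclideanSpace ℝ (Fin n))) = {a} := by simp
        rw [this, convexHull_singleton] at hu
        exact hu
      rw [hu']
      have has : a ∈ s := hts (by simp)
      simpa [joinIter] using has
    · have hts' : ↑t' ⊆ s := fun x hx => hts (by simp [hx])
      have hcard : (insert a t').card - 1 = (t'.card - 1) + 1 := by
        rw [Finset.card_insert_of_notMem ha]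
        have := Finset.card_pos.mpr h'
        omega
      rw [Finset.coe_insert, convexHull_insert (Finset.coe_nonempty.mpr h'), hcard]
      rintro u hu
      rw [mem_convexJoin] at hu
      obtain ⟨x, hx, z, hz, hu⟩ := hu
      rw [Set.mem_singleton_iff] at hx
      subst hx
      rw [segment_eq_image₂] at hu
      obtain ⟨⟨θ₁, θ₂⟩, ⟨h1, h2, h3⟩, rfl⟩ := hu
      simp only at h1 h2 h3 ⊢
      have hz' : z ∈ joinIter s (t'.card - 1) := ih hts' h' hz
      refine ⟨(θ₁, x, z), ⟨⟨h1, by linarith⟩, hts (by simp), hz'⟩, ?_⟩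
      simp only
      rw [show 1 - θ₁ = θ₂ by linarith]

lemma isCompact_convexHull {s : Set (EuclideanSpace ℝ (Fin n))} (hs : IsCompact s) :
    IsCompact (convexHull ℝ s) := by
  rcases s.eq_empty_or_nonempty with rfl | hne
  · simp only [convexHull_empty]; exact isCompact_empty
  · have heq : convexHull ℝ s = joinIter s n := by
      apply Set.Subset.antisymm
      · intro x hx
        rw [convexHull_eq_union] at hx
        simp only [Set.mem_iUnion] at hx
        obtain ⟨t, hts, hai, hx⟩ := hx
        have htne : t.Nonempty := by
          rcases t.eq_empty_or_nonempty with h | h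
          · rw [h] at hx; simp at hx
          · exact h
        have hcard : t.card ≤ n + 1 := by
          have h1 := hai.card_le_finrank_succ
          rw [Fintype.card_coe] at h1
          have h2 : Module.finrank ℝ
              (vectorSpan ℝ (Set.range ((↑) : ↥t → EuclideanSpace ℝ (Fin n)))) ≤ n := by
            have := Submodule.finrank_le
              (vectorSpan ℝ (Set.range ((↑) : ↥t → EuclideanSpace ℝ (Fin n))))
            rwa [finrank_euclideanSpace_fin] at this
          omega
        exact joinIter_mono hne (by omega)
          (convexHull_finset_subset_joinIter t hts htne hx)
      · exact joinIter_subset_convexHull n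
    rw [heq]
    exact joinIter_isCompact hs n

end SpindleAux

namespace SpindleAux
/-- If the center is not in the convex hull of the touching set, the ball can be shrunk. -/
lemma exists_smaller_ball {C : Set (EuclideanSpace ℝ (Fin n))} (hcomp : IsCompact C)
    {q : EuclideanSpace ℝ (Fin n)} {R : ℝ} (hR : 0 < R) (hsub : C ⊆ Metric.closedBall q R)
    (hq : q ∉ convexHull ℝ (C ∩ Metric.sphere q R)) :
    ∃ c r, r < R ∧ C ⊆ Metric.closedBall c r := by
  set T := C ∩ Metric.sphere q R with hT
  have hTcomp : IsCompact (convexHull ℝ T) :=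
    isCompact_convexHull (hcomp.inter_right isClosed_sphere)
  obtain ⟨f, u, hfq, hfT⟩ :=
    geometric_hahn_banach_point_closed (convex_convexHull ℝ T) hTcomp.isClosed hq
  set v : EuclideanSpace ℝ (Fin n) := (InnerProductSpace.toDual ℝ _).symm f with hv
  have hfv : ∀ y, inner ℝ v y = f y := fun y => InnerProductSpace.toDual_symm_apply
  set δ : ℝ := u - f q with hδ
  have hδpos : 0 < δ := by simp [hδ]; linarith
  have hsep : ∀ x ∈ T, δ ≤ inner ℝ v (x - q) := by
    intro x hx
    have h1 : u < f x := hfT x (subset_convexHull ℝ T hx)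
    have : inner ℝ v (x - q) = f x - f q := by rw [hfv, map_sub]
    rw [this, hδ]
    linarith
  -- the part of C below the separating level
  set K := C ∩ {x | inner ℝ v (x - q) ≤ δ / 2} with hK
  have hKclosed : IsClosed {x : EuclideanSpace ℝ (Fin n) | inner ℝ v (x - q) ≤ δ / 2} := by
    have hcont : Continuous fun x : EuclideanSpace ℝ (Fin n) => (inner ℝ v (x - q) : ℝ) :=
      Continuous.inner continuous_const (continuous_id.sub continuous_const)
    exact isClosed_le hcont continuous_const
  have hKcomp : IsCompact K := hcomp.inter_right hKclosed
  obtain ⟨R', hR'0, hR'lt, hR'bd⟩ :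
      ∃ R', 0 ≤ R' ∧ R' < R ∧ ∀ x ∈ K, dist x q ≤ R' := by
    rcases K.eq_empty_or_nonempty with h | hKne
    · exact ⟨0, le_refl _, hR, by simp [h]⟩
    · obtain ⟨x₀, hx₀K, hx₀max⟩ := hKcomp.exists_isMaxOn hKne
        ((continuous_id.dist continuous_const).continuousOn)
      refine ⟨dist x₀ q, dist_nonneg, ?_, fun y hy => hx₀max hy⟩
      have hle : dist x₀ q ≤ R := hsub hx₀K.1
      rcases lt_or_eq_of_le hle with h | h
      · exact h
      · exfalso
        have hx₀T : x₀ ∈ T := ⟨hx₀K.1, by simpa [Metric.mem_sphere, dist_eq_norm] using h⟩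
        have := hsep x₀ hx₀T
        have := hx₀K.2
        simp only [Set.mem_setOf_eq] at this
        linarith [hsep x₀ hx₀T, hx₀K.2]
  set ε : ℝ := min (δ / (2 * (‖v‖ ^ 2 + 1))) ((R - R') / (2 * (‖v‖ + 1))) with hε
  have hεpos : 0 < ε := by
    apply lt_min
    · positivity
    · have : 0 < R - R' := by linarith
      positivity
  have hε1 : ε * ‖v‖ ^ 2 ≤ δ / 2 := by
    have h1 : ε ≤ δ / (2 * (‖v‖ ^ 2 + 1)) := min_le_left _ _
    have h2 : (0:ℝ) < 2 * (‖v‖ ^ 2 + 1) := by positivity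
    rw [le_div_iff₀ h2] at h1
    nlinarith [sq_nonneg ‖v‖]
  have hε2 : ε * ‖v‖ ≤ (R - R') / 2 := by
    have h1 : ε ≤ (R - R') / (2 * (‖v‖ + 1)) := min_le_right _ _
    have h2 : (0:ℝ) < 2 * (‖v‖ + 1) := by positivity
    rw [le_div_iff₀ h2] at h1
    nlinarith [norm_nonneg v, hεpos.le]
  refine ⟨q + ε • v, max (Real.sqrt (R ^ 2 - ε * δ / 2)) ((R + R') / 2), ?_, ?_⟩
  · apply max_lt
    · rw [Real.sqrt_lt' hR]
      nlinarith
    · linarith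
  · intro x hx
    rw [Metric.mem_closedBall]
    by_cases hxK : inner ℝ v (x - q) ≤ δ / 2
    · have hxK' : x ∈ K := ⟨hx, hxK⟩
      have h1 : dist x (q + ε • v) ≤ dist x q + dist q (q + ε • v) := dist_triangle _ _ _
      have h2 : dist q (q + ε • v) = ε * ‖v‖ := by
        rw [dist_eq_norm, show q - (q + ε • v) = -(ε • v) by abel, norm_neg, norm_smul,
          Real.norm_of_nonneg hεpos.le]
      have h3 : dist x q ≤ R' := hR'bd x hxK'
      have : dist x (q + ε • v) ≤ (R + R') / 2 := by
        rw [h2] at h1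
        linarith
      exact le_trans this (le_max_right _ _)
    · push_neg at hxK
      have hd2 : dist x (q + ε • v) ^ 2 ≤ R ^ 2 - ε * δ / 2 := by
        rw [dist_eq_norm, show x - (q + ε • v) = (x - q) - ε • v by abel, norm_sub_sq_real,
          real_inner_smul_right, norm_smul, Real.norm_of_nonneg hεpos.le, mul_pow]
        have hxq : ‖x - q‖ ≤ R := by
          have := hsub hx
          rwa [Metric.mem_closedBall, dist_eq_norm] at this
        have hin : inner ℝ (x - q) v = (inner ℝ v (x - q) : ℝ) := real_inner_comm _ _
        rw [hin]
        nlinarith [norm_nonneg (x - q), sq_nonneg ε]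
      have h0 : (0:ℝ) ≤ R ^ 2 - ε * δ / 2 := le_trans (sq_nonneg _) hd2
      have := (Real.le_sqrt dist_nonneg h0).mpr hd2
      exact le_trans this (le_max_left _ _)


/-- Existence of a circumcenter (a center minimizing the containing radius). -/
lemma exists_circumcenter {C : Set (EuclideanSpace ℝ (Fin n))} (hcomp : IsCompact C)
    (hne : C.Nonempty) :
    ∃ q R, 0 ≤ R ∧ (∀ x ∈ C, dist x q ≤ R) ∧
      ∀ c r, C ⊆ Metric.closedBall c r → R ≤ r := by
  set F : EuclideanSpace ℝ (Fin n) → ℝ := fun c => sSup ((fun x => dist x c) '' C) with hF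
  have hbdd : ∀ c, BddAbove ((fun x : EuclideanSpace ℝ (Fin n) => dist x c) '' C) := fun c =>
    (hcomp.image (continuous_id.dist continuous_const)).bddAbove
  have hFle : ∀ c, ∀ x ∈ C, dist x c ≤ F c := fun c x hx =>
    le_csSup (hbdd c) (Set.mem_image_of_mem _ hx)
  have hFmin : ∀ c r, (∀ x ∈ C, dist x c ≤ r) → F c ≤ r := by
    intro c r h
    apply csSup_le (hne.image _)
    rintro y ⟨x, hx, rfl⟩
    exact h x hx
  have hLip : ∀ c c', F c ≤ F c' + dist c c' := by
    intro c c'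
    apply hFmin
    intro x hx
    calc dist x c ≤ dist x c' + dist c' c := dist_triangle _ _ _
      _ ≤ F c' + dist c c' := by rw [dist_comm c' c]; linarith [hFle c' x hx]
  have hcont : Continuous F := by
    apply LipschitzWith.continuous (K := 1)
    apply LipschitzWith.of_dist_le_mul
    intro c c'
    rw [Real.dist_eq, NNReal.coe_one, one_mul, abs_sub_le_iff]
    constructor
    · linarith [hLip c c', dist_comm c c']
    · linarith [hLip c' c, dist_comm c c']
  obtain ⟨x₀, hx₀⟩ := hne
  have hF0 : 0 ≤ F x₀ := le_trans dist_nonneg (hFle x₀ x₀ hx₀)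
  obtain ⟨q, hqB, hqmin⟩ := (isCompact_closedBall x₀ (2 * F x₀ + 1)).exists_isMinOn
    ⟨x₀, by simp; positivity⟩ hcont.continuousOn
  have hqglob : ∀ c, F q ≤ F c := by
    intro c
    by_cases hc : c ∈ Metric.closedBall x₀ (2 * F x₀ + 1)
    · exact hqmin hc
    · have h1 : 2 * F x₀ + 1 < dist c x₀ := not_le.mp (by rwa [Metric.mem_closedBall] at hc)
      have h2 : dist x₀ c ≤ F c := hFle c x₀ hx₀
      have h3 : F q ≤ F x₀ := hqmin (by simp; positivity)
      linarith [dist_comm x₀ c ▸ h1]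
  refine ⟨q, F q, le_trans dist_nonneg (hFle q x₀ hx₀), hFle q, ?_⟩
  · intro c r hsub
    have : F c ≤ r := hFmin c r fun x hx => by
      have := hsub hx; rwa [Metric.mem_closedBall] at this
    linarith [hqglob c]

/-- Bridge from convex hull membership to antipodal-pair data. -/
lemma hull_to_list {C : Set (EuclideanSpace ℝ (Fin n))} {q : EuclideanSpace ℝ (Fin n)} {R : ℝ}
    (hq : q ∈ convexHull ℝ (C ∩ Metric.sphere q R)) :
    ∃ L : List (ℝ × EuclideanSpace ℝ (Fin n)), L ≠ [] ∧
      (∀ p ∈ L, 0 < p.1 ∧ p.2 ∈ C ∧ ‖p.2 - q‖ = R) ∧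
      (L.map (fun p => p.1 • (p.2 - q))).sum = 0 := by
  classical
  rw [convexHull_eq] at hq
  obtain ⟨ι, t, w, z, h0, h1, hz, hcm⟩ := hq
  have hq' : ∑ i ∈ t, w i • z i = q := by
    rwa [Finset.centerMass_eq_of_sum_1 _ _ h1] at hcm
  set t' := t.filter (fun i => 0 < w i) with ht'
  have ht'ne : t'.Nonempty := by
    by_contra h
    rw [Finset.not_nonempty_iff_eq_empty, Finset.filter_eq_empty_iff] at h
    have : ∑ i ∈ t, w i ≤ 0 := Finset.sum_nonpos fun i hi => not_lt.mp (h hi)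
    linarith
  refine ⟨t'.toList.map (fun i => (w i, z i)), ?_, ?_, ?_⟩
  · simp only [ne_eq, List.map_eq_nil_iff]
    exact ht'ne.toList_ne_nil
  · intro p hp
    simp only [List.mem_map] at hp
    obtain ⟨i, hi, rfl⟩ := hp
    rw [Finset.mem_toList, ht', Finset.mem_filter] at hi
    obtain ⟨hit, hwi⟩ := hi
    obtain ⟨hiC, hiS⟩ := hz i hit
    exact ⟨hwi, hiC, by rwa [← dist_eq_norm, ← Metric.mem_sphere]⟩
  · rw [List.map_map]
    have : ((t'.toList.map ((fun p : ℝ × EuclideanSpace ℝ (Fin n) => p.1 • (p.2 - q)) ∘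
        (fun i => (w i, z i))))).sum = ∑ i ∈ t', w i • (z i - q) := by
      exact Finset.sum_map_toList t' _
    rw [this]
    have hzero : ∀ i ∈ t, i ∉ t' → w i • (z i - q) = 0 := by
      intro i hit hit'
      rw [ht', Finset.mem_filter] at hit'
      have : w i = 0 := le_antisymm (not_lt.mp fun h => hit' ⟨hit, h⟩) (h0 i hit)
      rw [this, zero_smul]
    rw [Finset.sum_subset (Finset.filter_subset _ _) hzero]
    have : ∑ i ∈ t, w i • (z i - q) = (∑ i ∈ t, w i • z i) - (∑ i ∈ t, w i) • q := by
      rw [Finset.sum_smul]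
      rw [← Finset.sum_sub_distrib]
      congr 1
      ext i
      rw [smul_sub]
    rw [this, hq', h1, one_smul, sub_self]

/-- A closed unit ball inside another closed unit ball forces equal centers. -/
lemma ball_sub_ball {m c : EuclideanSpace ℝ (Fin n)}
    (h : Metric.closedBall m 1 ⊆ Metric.closedBall c 1) : m = c := by
  by_contra hne
  have hmc : (0:ℝ) < ‖m - c‖ := by
    rw [norm_pos_iff, sub_ne_zero]; exact hne
  set p := m + ‖m - c‖⁻¹ • (m - c) with hp
  have hpm : dist p m = 1 := by
    rw [dist_eq_norm, show p - m = ‖m - c‖⁻¹ • (m - c) by rw [hp]; abel, norm_smul,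
      Real.norm_of_nonneg (by positivity), inv_mul_cancel₀ (ne_of_gt hmc)]
  have hpc : dist p c ≤ 1 := h (by rw [Metric.mem_closedBall, hpm])
  have : p - c = (1 + ‖m - c‖⁻¹) • (m - c) := by
    rw [hp, add_smul, one_smul]; abel
  rw [dist_eq_norm, this, norm_smul, Real.norm_of_nonneg (by positivity)] at hpc
  have h2 : (1 + ‖m - c‖⁻¹) * ‖m - c‖ = ‖m - c‖ + 1 := by
    rw [add_mul, one_mul, inv_mul_cancel₀ (ne_of_gt hmc)]
  rw [h2] at hpc
  linarith

end SpindleAux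

end AuxLemmas

theorem spindleConvex_circumradius_ge_one (n : ℕ) (hn : 2 ≤ n)
    (C : Set (EuclideanSpace ℝ (Fin n))) (hne : C.Nonempty) (hcl : IsClosed C)
    (hC : SpindleConvex C) :
    ((∃ c, C ⊆ Metric.closedBall c 1) →
      (∀ c r, r < 1 → ¬ C ⊆ Metric.closedBall c r) →
      ∃ q, C = Metric.closedBall q 1) ∧
    ((¬ ∃ c, C ⊆ Metric.closedBall c 1) → C = Set.univ) := by
  constructor
  · rintro ⟨c₀, hc₀⟩ hmin
    have hcomp : IsCompact C :=
      Metric.isCompact_of_isClosed_isBounded hcl (Metric.isBounded_closedBall.subset hc₀)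
    have hq0 : c₀ ∈ convexHull ℝ (C ∩ Metric.sphere c₀ 1) := by
      by_contra h
      obtain ⟨c, r, hr, hsub⟩ := SpindleAux.exists_smaller_ball hcomp one_pos hc₀ h
      exact hmin c r hr hsub
    obtain ⟨L, hLne, hLmem, hLsum⟩ := SpindleAux.hull_to_list hq0
    rcases antipodal_of_combination hC (le_refl 1) L.length L le_rfl hLne hLmem hLsum with
      ⟨a, haC, b, hbC, hab⟩ | huniv
    · rw [mul_one] at hab
      have hball : Metric.closedBall (midpoint ℝ a b) 1 ⊆ C := by
        have hsp := hC a haC b hbC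
        rwa [spindle_antipodal hab] at hsp
      have hmeq : midpoint ℝ a b = c₀ := SpindleAux.ball_sub_ball (hball.trans hc₀)
      exact ⟨c₀, Set.Subset.antisymm hc₀ (hmeq ▸ hball)⟩
    · exfalso
      have hn0 : 0 < n := by omega
      set y := c₀ + (2:ℝ) • (EuclideanSpace.single (⟨0, hn0⟩ : Fin n) (1:ℝ)) with hy
      have hyC : y ∈ C := huniv ▸ Set.mem_univ y
      have hd := hc₀ hyC
      rw [Metric.mem_closedBall, dist_eq_norm] at hd
      have hsub : y - c₀ = (2:ℝ) • EuclideanSpace.single (⟨0, hn0⟩ : Fin n) (1:ℝ) := by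
        rw [hy]; abel
      rw [hsub, norm_smul] at hd
      simp only [EuclideanSpace.norm_single, norm_one, mul_one, Real.norm_ofNat] at hd
      linarith
  · intro h
    by_cases hfar : ∃ a ∈ C, ∃ b ∈ C, 2 < dist a b
    · obtain ⟨a, haC, b, hbC, hab⟩ := hfar
      have hsp := hC a haC b hbC
      rw [spindle_eq_univ hab] at hsp
      exact Set.eq_univ_of_univ_subset hsp
    · push_neg at hfar
      obtain ⟨x₀, hx₀⟩ := hne
      have hsub2 : C ⊆ Metric.closedBall x₀ 2 := fun x hx => by
        rw [Metric.mem_closedBall]; exact hfar x hx x₀ hx₀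
      have hcomp : IsCompact C := Metric.isCompact_of_isClosed_isBounded hcl
        (Metric.isBounded_closedBall.subset hsub2)
      obtain ⟨q, R, hR0, hRsub, hRmin⟩ := SpindleAux.exists_circumcenter hcomp ⟨x₀, hx₀⟩
      have hR1 : 1 < R := by
        by_contra hle
        exact h ⟨q, fun x hx =>
          Metric.mem_closedBall.mpr (le_trans (hRsub x hx) (not_lt.mp hle))⟩
      have hq0 : q ∈ convexHull ℝ (C ∩ Metric.sphere q R) := by
        by_contra hq
        obtain ⟨c, r, hr, hsub⟩ := SpindleAux.exists_smaller_ball hcomp (by linarith)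
          (fun x hx => Metric.mem_closedBall.mpr (hRsub x hx)) hq
        linarith [hRmin c r hsub]
      obtain ⟨L, hLne, hLmem, hLsum⟩ := SpindleAux.hull_to_list hq0
      rcases antipodal_of_combination hC (le_of_lt hR1) L.length L le_rfl hLne hLmem hLsum with
        ⟨a, haC, b, hbC, hab⟩ | huniv
      · exfalso
        have hd := hfar a haC b hbC
        rw [hab] at hd
        linarith
      · exact huniv
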